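/- Let n > 3 be a prime. The number of orbits of PGL_2(F_{2^n}) acting by Möbius transformations on the set S of elements of F_{2^{6n}} of degree 6 over F_{2^n} is 2^{3n} + 2^n - 1. -/

import Mathlib

local notation "K" => AlgebraicClosure (ZMod 2)

namespace Stmt4Aux
noncomputable section
set_option synthInstance.maxHeartbeats 1000000
set_option maxHeartbeats 1000000
open Polynomial MulAction

lemma charK : CharP K 2 := inferInstance

def φ (m : ℕ) : K →+* K := (frobenius K 2) ^ m

lemma φ_apply (m : ℕ) (x : K) : φ m x = x ^ 2 ^ m := by
  show ((frobenius K 2) ^ m) x = _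
  rw [RingHom.coe_pow, iterate_frobenius]

lemma two_eq_zero : (2 : K) = 0 := by
  have := charK; exact CharTwo.two_eq_zero

lemma neg_eq (x : K) : -x = x := by
  have := charK; exact CharTwo.neg_eq x

lemma pow_mult {x : K} {a : ℕ} (h : x ^ 2 ^ a = x) (t : ℕ) : x ^ 2 ^ (a * t) = x := by
  induction t with
  | zero => simp
  | succ t ih => rw [Nat.mul_succ, pow_add, pow_mul, ih, h]


def A (m : ℕ) : Set K := {x : K | x ^ 2 ^ m = x}

lemma A_poly (m : ℕ) (hm : 0 < m) :
    A m = (X ^ 2 ^ m - X : K[X]).rootSet K := by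
  have hne : (X ^ 2 ^ m - X : K[X]) ≠ 0 := by
    intro h
    have := congrArg (fun p => Polynomial.coeff p (2 ^ m)) h
    simp [coeff_X, (show ¬(1 : ℕ) = 2^m by
      have := Nat.one_lt_two_pow (show m ≠ 0 by omega); omega)] at this
  ext x
  simp [A, mem_rootSet, hne, sub_eq_zero]

lemma card_A (m : ℕ) (hm : 0 < m) : Nat.card (A m) = 2 ^ m := by
  have hsep : (X ^ 2 ^ m - X : K[X]).Separable := by
    rw [Polynomial.separable_def]
    have hd : derivative (X ^ 2 ^ m - X : K[X]) = -1 := by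
      rw [derivative_sub, derivative_X_pow, derivative_X]
      have h0 : ((2 ^ m : ℕ) : K) = 0 := by
        rw [Nat.cast_pow, Nat.cast_ofNat, two_eq_zero, zero_pow (by omega)]
      rw [h0]
      simp
    rw [hd]
    exact isCoprime_one_right.neg_right
  have hdeg : (X ^ 2 ^ m - X : K[X]).natDegree = 2 ^ m := by
    have h1 : (X : K[X]).natDegree < (X ^ 2 ^ m : K[X]).natDegree := by
      simp [natDegree_X_pow, Nat.one_lt_two_pow (show m ≠ 0 by omega)]
    rw [natDegree_sub_eq_left_of_natDegree_lt h1, natDegree_X_pow]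
  have hcard := Polynomial.card_rootSet_eq_natDegree hsep
    (IsAlgClosed.splits (k := K) _)
  rw [A_poly m hm, Nat.card_eq_fintype_card, hcard, hdeg]

lemma A_finite (m : ℕ) (hm : 0 < m) : (A m).Finite := by
  rw [A_poly m hm]
  exact Set.finite_coe_iff.mp (by infer_instance)

/-- the subfield F_{2^n} -/
def Fq (n : ℕ) : Subfield K where
  carrier := {x : K | x ^ 2 ^ n = x}
  mul_mem' := by intro a b ha hb; simp only [Set.mem_setOf_eq] at *; rw [mul_pow, ha, hb]
  one_mem' := by simp
  add_mem' := by
    intro a b ha hb; simp only [Set.mem_setOf_eq] at *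
    have := charK
    rw [add_pow_char_pow, ha, hb]
  zero_mem' := by simp
  neg_mem' := by intro a ha; simp only [Set.mem_setOf_eq] at *; rw [neg_eq]; exact ha
  inv_mem' := by intro a ha; simp only [Set.mem_setOf_eq] at *; rw [inv_pow, ha]

lemma mem_Fq {n : ℕ} {x : K} : x ∈ Fq n ↔ x ^ 2 ^ n = x := Iff.rfl

/-- the set of degree-6 elements -/
def S (n : ℕ) : Set K :=
  {α : K | α ^ 2 ^ (6 * n) = α ∧ α ^ 2 ^ (2 * n) ≠ α ∧ α ^ 2 ^ (3 * n) ≠ α}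

lemma pow_2n (x : K) (n : ℕ) : x ^ 2 ^ (2 * n) = (x ^ 2 ^ n) ^ 2 ^ n := by
  rw [two_mul, pow_add, pow_mul]

lemma pow_3n (x : K) (n : ℕ) : x ^ 2 ^ (3 * n) = ((x ^ 2 ^ n) ^ 2 ^ n) ^ 2 ^ n := by
  rw [show 3 * n = n + n + n by ring, pow_add, pow_add, pow_mul, pow_mul]

/-- fixed elements of Fq stay fixed under multiples -/
lemma Fq_pow_fix {n m : ℕ} {x : K} (hx : x ^ 2 ^ n = x) (hm : n ∣ m) : x ^ 2 ^ m = x := by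
  obtain ⟨t, rfl⟩ := hm
  exact pow_mult hx t

/-- a nonzero row gives a nonzero denominator on S -/
lemma denom_ne {n : ℕ} {α c d : K} (hα : α ∈ S n) (hc : c ^ 2 ^ n = c)
    (hd : d ^ 2 ^ n = d) (h : ¬(c = 0 ∧ d = 0)) : c * α + d ≠ 0 := by
  rcases eq_or_ne c 0 with rfl | hc0
  · simpa using fun hdd => h ⟨rfl, hdd⟩
  · intro h0
    have hαeq : α = d / c := by
      have h' := eq_neg_of_add_eq_zero_left h0
      rw [neg_eq] at h'
      rw [eq_div_iff hc0, mul_comm]; exact h'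
    have h1 : α ^ 2 ^ n = α := by
      rw [hαeq, div_pow, hc, hd]
    exact hα.2.1 (by rw [pow_2n, h1, h1])

/-- the Möbius expression -/
def mob (a b c d α : K) : K := (a * α + b) / (c * α + d)

lemma mob_pow {m : ℕ} {a b c d α : K} (ha : a ^ 2 ^ m = a) (hb : b ^ 2 ^ m = b)
    (hc : c ^ 2 ^ m = c) (hd : d ^ 2 ^ m = d) :
    (mob a b c d α) ^ 2 ^ m = mob a b c d (α ^ 2 ^ m) := by
  have h := map_div₀ (φ m) (a * α + b) (c * α + d)
  simp only [map_add, map_mul, φ_apply, ha, hb, hc, hd] at h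
  simpa [mob] using h

/-- inverse Möbius identity in characteristic 2 -/
lemma mob_inv {a b c d α : K} (hD : c * α + d ≠ 0) (hdet : a * d - b * c ≠ 0) :
    mob d b c a (mob a b c d α) = α ∧ c * (mob a b c d α) + a ≠ 0 := by
  set β := mob a b c d α with hβ
  have hnum : c * β + a = (a * d - b * c) / (c * α + d) := by
    rw [hβ, mob]
    field_simp
    linear_combination (b * c + c * a * α) * two_eq_zero
  have hne : c * β + a ≠ 0 := by
    rw [hnum]; exact div_ne_zero hdet hD
  constructor
  · have hnum2 : d * β + b = ((a * d - b * c) * α) / (c * α + d) := by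
      rw [hβ, mob]
      have : α * c + d ≠ 0 := by rwa [mul_comm]
      field_simp
      linear_combination (b * d + α * b * c) * two_eq_zero
    rw [mob, hnum2, hnum]
    field_simp
  · exact hne

/-- closure of S under Möbius transformations with Fq coefficients -/
lemma S_mob {n : ℕ} {a b c d α : K} (hα : α ∈ S n) (ha : a ^ 2 ^ n = a)
    (hb : b ^ 2 ^ n = b) (hc : c ^ 2 ^ n = c) (hd : d ^ 2 ^ n = d)
    (hdet : a * d - b * c ≠ 0) : mob a b c d α ∈ S n := by
  have hrow : ¬(c = 0 ∧ d = 0) := by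
    rintro ⟨rfl, rfl⟩; simp at hdet
  have hD : c * α + d ≠ 0 := denom_ne hα hc hd hrow
  obtain ⟨hinv, hne⟩ := mob_inv hD hdet
  have fix : ∀ m : ℕ, n ∣ m →
      (a ^ 2 ^ m = a ∧ b ^ 2 ^ m = b ∧ c ^ 2 ^ m = c ∧ d ^ 2 ^ m = d) :=
    fun m hm => ⟨Fq_pow_fix ha hm, Fq_pow_fix hb hm, Fq_pow_fix hc hm, Fq_pow_fix hd hm⟩
  refine ⟨?_, ?_, ?_⟩
  · obtain ⟨h1, h2, h3, h4⟩ := fix (6 * n) ⟨6, by ring⟩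
    rw [mob_pow h1 h2 h3 h4, hα.1]
  · intro hfix
    obtain ⟨h1, h2, h3, h4⟩ := fix (2 * n) ⟨2, by ring⟩
    have : α ^ 2 ^ (2 * n) = α := by
      conv_lhs => rw [← hinv]
      rw [mob_pow h4 h2 h3 h1, hfix, hinv]
    exact hα.2.1 this
  · intro hfix
    obtain ⟨h1, h2, h3, h4⟩ := fix (3 * n) ⟨3, by ring⟩
    have : α ^ 2 ^ (3 * n) = α := by
      conv_lhs => rw [← hinv]
      rw [mob_pow h4 h2 h3 h1, hfix, hinv]
    exact hα.2.2 this

/-- no nontrivial quadratic relation over Fq for an element of S -/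
lemma quad_zero {n : ℕ} {α c e b : K} (hα : α ∈ S n) (hc : c ^ 2 ^ n = c)
    (he : e ^ 2 ^ n = e) (hb : b ^ 2 ^ n = b)
    (h : c * α ^ 2 + e * α + b = 0) : c = 0 ∧ e = 0 ∧ b = 0 := by
  have hinj : Function.Injective (φ n) := (φ n).injective
  have step : ∀ x : K, c * x ^ 2 + e * x + b = 0 →
      c * (x ^ 2 ^ n) ^ 2 + e * (x ^ 2 ^ n) + b = 0 := by
    intro x hx
    have := congrArg (φ n) hx
    simpa [map_add, map_mul, map_pow, φ_apply, hc, he, hb] using this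
  set α1 := α ^ 2 ^ n with hα1
  set α2 := α1 ^ 2 ^ n with hα2
  have h1 : c * α1 ^ 2 + e * α1 + b = 0 := step α h
  have h2 : c * α2 ^ 2 + e * α2 + b = 0 := step α1 h1
  have h2n : α ^ 2 ^ (2 * n) = α2 := by rw [pow_2n]
  have hcc : c = 0 := by
    by_contra hc0
    have hα2ne : α2 ≠ α := fun hh => hα.2.1 (h2n.trans hh)
    have hα1ne : α1 ≠ α := by
      intro hh
      exact hα2ne (by rw [hα2, hh, ← hα1, hh])
    have hα12 : α1 ≠ α2 := by
      intro hh
      apply hα1ne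
      have : φ n α1 = φ n α := by
        rw [φ_apply, φ_apply, ← hα1, ← hα2, ← hh]
      exact hinj this
    have pair : ∀ x y : K, c * x ^ 2 + e * x + b = 0 → c * y ^ 2 + e * y + b = 0 →
        x ≠ y → c * (x + y) + e = 0 := by
      intro x y hx hy hxy
      have hfac : (x - y) * (c * (x + y) + e) = 0 := by linear_combination hx - hy
      rcases mul_eq_zero.mp hfac with h' | h'
      · exact absurd (sub_eq_zero.mp h') hxy
      · exact h'
    have p1 : c * (α + α1) + e = 0 := pair α α1 h h1 (fun hh => hα1ne hh.symm)
    have p2 : c * (α + α2) + e = 0 := pair α α2 h h2 (fun hh => hα2ne hh.symm)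
    have : c * (α1 - α2) = 0 := by linear_combination p1 - p2
    rcases mul_eq_zero.mp this with h' | h'
    · exact hc0 h'
    · exact hα12 (sub_eq_zero.mp h')
  subst hcc
  have hee : e = 0 := by
    by_contra he0
    have hlin : e * α1 + b = 0 := by simpa using h1
    have hlin0 : e * α + b = 0 := by simpa using h
    have : e * (α1 - α) = 0 := by linear_combination hlin - hlin0
    rcases mul_eq_zero.mp this with h' | h'
    · exact he0 h'
    · have hα1α : α1 = α := sub_eq_zero.mp h'
      exact hα.2.1 (by rw [pow_2n, ← hα1, hα1α, ← hα1, hα1α])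
  subst hee
  simpa using h

variable (n : ℕ)

/-- entries of a GL₂(Fq) element as elements of K -/
def eK (g : GL (Fin 2) (Fq n)) (i j : Fin 2) : K := ((g.val i j : Fq n) : K)

lemma eK_fix (g : GL (Fin 2) (Fq n)) (i j : Fin 2) : eK n g i j ^ 2 ^ n = eK n g i j :=
  (g.val i j).2

lemma eK_det_ne (g : GL (Fin 2) (Fq n)) :
    eK n g 0 0 * eK n g 1 1 - eK n g 0 1 * eK n g 1 0 ≠ 0 := by
  have hu : IsUnit g.val.det := (Matrix.isUnit_iff_isUnit_det _).mp g.isUnit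
  have hne : g.val.det ≠ 0 := hu.ne_zero
  rw [Matrix.det_fin_two] at hne
  intro h0
  apply hne
  have : (((g.val 0 0 * g.val 1 1 - g.val 0 1 * g.val 1 0 : Fq n)) : K) = 0 := by
    push_cast
    exact h0
  exact_mod_cast this

lemma eK_mul (g h : GL (Fin 2) (Fq n)) (i j : Fin 2) :
    eK n (g * h) i j = eK n g i 0 * eK n h 0 j + eK n g i 1 * eK n h 1 j := by
  show (((g * h).val i j : Fq n) : K) = _
  rw [Units.val_mul, Matrix.mul_apply, Fin.sum_univ_two]
  push_cast
  rfl

lemma eK_one (i j : Fin 2) : eK n (1 : GL (Fin 2) (Fq n)) i j = if i = j then 1 else 0 := by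
  show (((1 : GL (Fin 2) (Fq n)).val i j : Fq n) : K) = _
  rw [Units.val_one, Matrix.one_apply]
  split <;> simp

/-- rows of invertible matrices are nonzero; denominator nonvanishing -/
lemma gl_denom_ne (g : GL (Fin 2) (Fq n)) {α : K} (hα : α ∈ S n) :
    eK n g 1 0 * α + eK n g 1 1 ≠ 0 := by
  apply denom_ne hα (eK_fix n g 1 0) (eK_fix n g 1 1)
  rintro ⟨h1, h2⟩
  exact eK_det_ne n g (by rw [h1, h2]; ring)

def glSMul (g : GL (Fin 2) (Fq n)) (x : ↥(S n)) : ↥(S n) :=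
  ⟨mob (eK n g 0 0) (eK n g 0 1) (eK n g 1 0) (eK n g 1 1) x.1,
   S_mob x.2 (eK_fix n g 0 0) (eK_fix n g 0 1) (eK_fix n g 1 0) (eK_fix n g 1 1)
     (eK_det_ne n g)⟩

instance glAction : MulAction (GL (Fin 2) (Fq n)) ↥(S n) where
  smul := glSMul n
  one_smul x := by
    apply Subtype.ext
    show mob (eK n 1 0 0) (eK n 1 0 1) (eK n 1 1 0) (eK n 1 1 1) x.1 = x.1
    simp [eK_one, mob]
  mul_smul g h x := by
    apply Subtype.ext
    show mob (eK n (g*h) 0 0) (eK n (g*h) 0 1) (eK n (g*h) 1 0) (eK n (g*h) 1 1) x.1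
      = mob (eK n g 0 0) (eK n g 0 1) (eK n g 1 0) (eK n g 1 1)
          (mob (eK n h 0 0) (eK n h 0 1) (eK n h 1 0) (eK n h 1 1) x.1)
    set a := eK n g 0 0; set b := eK n g 0 1; set c := eK n g 1 0; set d := eK n g 1 1
    set a' := eK n h 0 0; set b' := eK n h 0 1; set c' := eK n h 1 0; set d' := eK n h 1 1
    set α := x.1
    have hD1 : c' * α + d' ≠ 0 := gl_denom_ne n h x.2
    have hD2 : eK n (g*h) 1 0 * α + eK n (g*h) 1 1 ≠ 0 := gl_denom_ne n (g*h) x.2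
    rw [eK_mul, eK_mul, eK_mul, eK_mul] at *
    set β := mob a' b' c' d' α with hβ
    have key : c * β + d = ((c * a' + d * c') * α + (c * b' + d * d')) / (c' * α + d') := by
      rw [hβ, mob]
      have : α * c' + d' ≠ 0 := by rwa [mul_comm]
      field_simp
      ring
    have key2 : a * β + b = ((a * a' + b * c') * α + (a * b' + b * d')) / (c' * α + d') := by
      rw [hβ, mob]
      have : α * c' + d' ≠ 0 := by rwa [mul_comm]
      field_simp
      ring
    rw [show mob a b c d β = (a * β + b) / (c * β + d) from rfl, key, key2, mob,
      div_div_div_cancel_right₀ hD1]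

/-- scalar matrices as elements of GL₂ -/
def scalarGL (u : (Fq n)ˣ) : GL (Fin 2) (Fq n) :=
  Units.map (Matrix.scalar (Fin 2)).toMonoidHom u

lemma scalarGL_val (u : (Fq n)ˣ) (i j : Fin 2) :
    (scalarGL n u).val i j = if i = j then (u : Fq n) else 0 := by
  show (Matrix.scalar (Fin 2) (u : Fq n)) i j = _
  rw [Matrix.scalar_apply]
  split
  · next h => rw [h, Matrix.diagonal_apply_eq]
  · next h => rw [Matrix.diagonal_apply_ne _ h]

lemma smul_val (g : GL (Fin 2) (Fq n)) (x : ↥(S n)) :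
    (g • x).1 = mob (eK n g 0 0) (eK n g 0 1) (eK n g 1 0) (eK n g 1 1) x.1 := rfl

lemma stab_iff (x : ↥(S n)) (g : GL (Fin 2) (Fq n)) (hg : g • x = x) :
    ∃ u : (Fq n)ˣ, scalarGL n u = g := by
  set a := eK n g 0 0 with ha'
  set b := eK n g 0 1
  set c := eK n g 1 0
  set d := eK n g 1 1
  set α := x.1
  have hα : α ∈ S n := x.2
  have hD : c * α + d ≠ 0 := gl_denom_ne n g hα
  have heq : mob a b c d α = α := congrArg Subtype.val hg
  have hquad : c * α ^ 2 + (d - a) * α + (-b) = 0 := by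
    rw [mob, div_eq_iff hD] at heq
    linear_combination -heq
  have hfix1 : (d - a) ^ 2 ^ n = d - a := by
    have := map_sub (φ n) d a
    rw [φ_apply, φ_apply, φ_apply, eK_fix, eK_fix] at this
    rw [this]
  have hfix2 : (-b) ^ 2 ^ n = -b := by
    rw [neg_eq]; exact eK_fix n g 0 1
  obtain ⟨hc0, hda, hb0⟩ := quad_zero hα (eK_fix n g 1 0) hfix1 hfix2 hquad
  have hb0' : b = 0 := by rw [← neg_eq b]; exact hb0
  have hda' : d = a := by rw [sub_eq_zero] at hda; exact hda
  have hane : (g.val 0 0 : Fq n) ≠ 0 := by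
    intro h0
    apply eK_det_ne n g
    have : a = 0 := by rw [ha', eK, h0]; simp
    rw [← ha']
    show a * d - b * c = 0
    rw [this, hb0']; ring
  refine ⟨Units.mk0 (g.val 0 0) hane, ?_⟩
  apply Units.ext
  apply Matrix.ext
  intro i j
  rw [scalarGL_val]
  have entry : ∀ v w : Fq n, (v : K) = (w : K) → v = w := fun v w h => Subtype.coe_injective h
  fin_cases i <;> fin_cases j <;>
    simp only [Fin.mk_zero, Fin.mk_one, Units.val_mk0, if_pos, if_neg,
      (by decide : ((0:Fin 2) = 1) = False), (by decide : ((1:Fin 2) = 0) = False),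
      if_true, if_false, eq_self_iff_true]
  · exact (entry _ _ (by rw [ZeroMemClass.coe_zero]; exact hb0')).symm
  · exact (entry _ _ (by rw [ZeroMemClass.coe_zero]; exact hc0)).symm
  · exact (entry _ _ hda').symm

lemma eK_scalarGL (u : (Fq n)ˣ) (i j : Fin 2) :
    eK n (scalarGL n u) i j = if i = j then ((u : Fq n) : K) else 0 := by
  rw [eK, scalarGL_val]
  split <;> simp

lemma coe_unit_ne (u : (Fq n)ˣ) : ((u : Fq n) : K) ≠ 0 := by
  intro h
  exact u.ne_zero (Subtype.coe_injective (by simpa using h))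

lemma scalar_smul (u : (Fq n)ˣ) (x : ↥(S n)) : scalarGL n u • x = x := by
  apply Subtype.ext
  rw [smul_val]
  simp only [eK_scalarGL]
  simp only [if_pos rfl, if_neg (by decide : ¬(0 : Fin 2) = 1), if_neg (by decide : ¬(1 : Fin 2) = 0)]
  rw [mob, add_zero, zero_mul, zero_add]
  exact mul_div_cancel_left₀ _ (coe_unit_ne n u)

lemma stab_card (x : ↥(S n)) :
    Nat.card (MulAction.stabilizer (GL (Fin 2) (Fq n)) x) = Nat.card (Fq n)ˣ := by
  symm
  apply Nat.card_eq_of_bijective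
    (fun u : (Fq n)ˣ => (⟨scalarGL n u, scalar_smul n u x⟩ :
      MulAction.stabilizer (GL (Fin 2) (Fq n)) x))
  constructor
  · intro u v huv
    have huv' : scalarGL n u = scalarGL n v := congrArg Subtype.val huv
    have h := congrArg (fun s : GL (Fin 2) (Fq n) => s.val 0 0) huv'
    simp only [scalarGL_val, if_pos rfl] at h
    exact Units.ext h
  · rintro ⟨g, hg⟩
    obtain ⟨u, hu⟩ := stab_iff n x g hg
    exact ⟨u, Subtype.ext hu⟩

def orbSet (n : ℕ) (α : K) : Set K :=
  {β : K | ∃ a b c d : K,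
    a ^ (2 ^ n) = a ∧ b ^ (2 ^ n) = b ∧ c ^ (2 ^ n) = c ∧ d ^ (2 ^ n) = d ∧
    a * d - b * c ≠ 0 ∧ β = (a * α + b) / (c * α + d)}

lemma image_orbit (x : ↥(S n)) :
    Subtype.val '' (MulAction.orbit (GL (Fin 2) (Fq n)) x) = orbSet n x.1 := by
  ext β
  constructor
  · rintro ⟨y, ⟨g, rfl⟩, rfl⟩
    exact ⟨eK n g 0 0, eK n g 0 1, eK n g 1 0, eK n g 1 1,
      eK_fix n g 0 0, eK_fix n g 0 1, eK_fix n g 1 0, eK_fix n g 1 1,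
      eK_det_ne n g, smul_val n g x⟩
  · rintro ⟨a, b, c, d, ha, hb, hc, hd, hdet, rfl⟩
    set M : Matrix (Fin 2) (Fin 2) (Fq n) :=
      !![⟨a, ha⟩, ⟨b, hb⟩; ⟨c, hc⟩, ⟨d, hd⟩] with hM
    have hdetM : M.det ≠ 0 := by
      rw [hM, Matrix.det_fin_two_of]
      intro h0
      apply hdet
      have := congrArg (fun z : Fq n => (z : K)) h0
      push_cast at this
      exact this
    set g := Matrix.GeneralLinearGroup.mkOfDetNeZero M hdetM with hg
    have hgval : g.val = M := rfl
    refine ⟨g • x, ⟨g, rfl⟩, ?_⟩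
    rw [smul_val]
    have e00 : eK n g 0 0 = a := by rw [eK, hgval, hM]; simp
    have e01 : eK n g 0 1 = b := by rw [eK, hgval, hM]; simp
    have e10 : eK n g 1 0 = c := by rw [eK, hgval, hM]; simp
    have e11 : eK n g 1 1 = d := by rw [eK, hgval, hM]; simp
    rw [e00, e01, e10, e11, mob]

lemma pow_eq_q (n k : ℕ) : 2 ^ (k * n) = (2 ^ n) ^ k := by
  rw [← pow_mul, mul_comm]

/-- main counting theorem -/
theorem main (n : ℕ) (hn : 0 < n) :
    Nat.card {O : Set K // ∃ α : K,
        (α ^ (2 ^ (6 * n)) = α ∧ α ^ (2 ^ (2 * n)) ≠ α ∧ α ^ (2 ^ (3 * n)) ≠ α) ∧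
        O = {β : K | ∃ a b c d : K,
          a ^ (2 ^ n) = a ∧ b ^ (2 ^ n) = b ∧ c ^ (2 ^ n) = c ∧ d ^ (2 ^ n) = d ∧
          a * d - b * c ≠ 0 ∧ β = (a * α + b) / (c * α + d)}}
      = 2 ^ (3 * n) + 2 ^ n - 1 := by
  classical
  set q := 2 ^ n with hq
  have hq2 : 2 ≤ q := by
    rw [hq]; calc 2 = 2^1 := (pow_one 2).symm
    _ ≤ 2^n := Nat.pow_le_pow_right (by norm_num) hn
  -- finiteness
  have hSsub : S n ⊆ A (6 * n) := fun x hx => hx.1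
  have hfinS : (S n).Finite := (A_finite (6 * n) (by omega)).subset hSsub
  haveI : Finite ↥(S n) := hfinS.to_subtype
  have equivFqA : ↥(Fq n) ≃ ↥(A n) := Equiv.subtypeEquivRight (fun x => Iff.rfl)
  haveI : Finite ↥(A n) := (A_finite n hn).to_subtype
  haveI : Finite (Fq n) := Finite.of_equiv _ equivFqA.symm
  haveI : Fintype (Fq n) := Fintype.ofFinite _
  have hcardFq : Fintype.card (Fq n) = q := by
    rw [← Nat.card_eq_fintype_card, Nat.card_congr equivFqA, card_A n hn]
  -- group cardinalities
  have hcardU : Nat.card (Fq n)ˣ = q - 1 := by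
    rw [Nat.card_eq_fintype_card, Fintype.card_units, hcardFq]
  have hcardGL : Nat.card (GL (Fin 2) (Fq n)) = (q ^ 2 - 1) * (q ^ 2 - q) := by
    rw [Matrix.card_GL_field, Fin.prod_univ_two]
    simp [hcardFq]
  -- orbit cardinality
  have horb : ∀ x : ↥(S n),
      Nat.card (MulAction.orbit (GL (Fin 2) (Fq n)) x) = q * (q ^ 2 - 1) := by
    intro x
    have h1 : Nat.card (GL (Fin 2) (Fq n)) =
        Nat.card (GL (Fin 2) (Fq n) ⧸ MulAction.stabilizer (GL (Fin 2) (Fq n)) x) *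
          Nat.card (MulAction.stabilizer (GL (Fin 2) (Fq n)) x) :=
      Subgroup.card_eq_card_quotient_mul_card_subgroup _
    rw [stab_card, hcardU, hcardGL] at h1
    have h2 : Nat.card (MulAction.orbit (GL (Fin 2) (Fq n)) x) =
        Nat.card (GL (Fin 2) (Fq n) ⧸ MulAction.stabilizer (GL (Fin 2) (Fq n)) x) :=
      Nat.card_congr (MulAction.orbitEquivQuotientStabilizer _ x)
    rw [h2]
    have hident : q * (q ^ 2 - 1) * (q - 1) = (q ^ 2 - 1) * (q ^ 2 - q) := by
      have h1q : 1 ≤ q := by omega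
      have h1q2 : 1 ≤ q ^ 2 := Nat.one_le_pow _ _ (by omega)
      have hqq2 : q ≤ q ^ 2 := by nlinarith
      zify [h1q, h1q2, hqq2]
      ring
    apply Nat.eq_of_mul_eq_mul_right (show 0 < q - 1 by omega)
    rw [hident, ← h1]
  -- orbit counting
  set Ω := MulAction.orbitRel.Quotient (GL (Fin 2) (Fq n)) ↥(S n) with hΩ
  haveI : Finite Ω := Quotient.finite _
  haveI : Fintype Ω := Fintype.ofFinite _
  haveI : Fintype ↥(S n) := Fintype.ofFinite _
  have hcount : Nat.card ↥(S n) = Nat.card Ω * (q * (q ^ 2 - 1)) := by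
    have e := MulAction.selfEquivSigmaOrbits (GL (Fin 2) (Fq n)) ↥(S n)
    rw [Nat.card_congr e, Nat.card_eq_fintype_card, Fintype.card_sigma]
    have : ∀ ω : Ω, Fintype.card (MulAction.orbit (GL (Fin 2) (Fq n)) ω.out)
        = q * (q ^ 2 - 1) := by
      intro ω
      rw [← Nat.card_eq_fintype_card, horb]
    rw [Finset.sum_congr rfl (fun ω _ => this ω), Finset.sum_const, Finset.card_univ,
      smul_eq_mul, Nat.card_eq_fintype_card]
  -- cardinality of S
  have hSdiff : S n = A (6 * n) \ (A (2 * n) ∪ A (3 * n)) := by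
    ext x
    simp only [S, A, Set.mem_setOf_eq, Set.mem_diff, Set.mem_union]
    tauto
  have hU_sub : A (2 * n) ∪ A (3 * n) ⊆ A (6 * n) := by
    apply Set.union_subset
    · intro x hx
      have := pow_mult hx 3
      rwa [show 2 * n * 3 = 6 * n by ring] at this
    · intro x hx
      have := pow_mult hx 2
      rwa [show 3 * n * 2 = 6 * n by ring] at this
  have hInter : A (2 * n) ∩ A (3 * n) = A n := by
    ext x
    constructor
    · rintro ⟨hx2, hx3⟩
      have h32 : x ^ 2 ^ (3 * n) = x ^ 2 ^ n := by
        rw [show 3 * n = 2 * n + n by ring, pow_add, pow_mul, hx2]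
      show x ^ 2 ^ n = x
      rw [← h32]; exact hx3
    · intro hx
      constructor
      · have := pow_mult hx 2; rwa [mul_comm n 2] at this
      · have := pow_mult hx 3; rwa [mul_comm n 3] at this
  have hfin2 : (A (2 * n)).Finite := A_finite _ (by omega)
  have hfin3 : (A (3 * n)).Finite := A_finite _ (by omega)
  have hfinU : (A (2 * n) ∪ A (3 * n)).Finite := hfin2.union hfin3
  have e1 : (S n).ncard + (A (2 * n) ∪ A (3 * n)).ncard = (A (6 * n)).ncard := by
    rw [hSdiff]
    exact Set.ncard_diff_add_ncard_of_subset hU_sub (A_finite _ (by omega))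
  have e2 : (A (2 * n) ∩ A (3 * n)).ncard + (A (2 * n) ∪ A (3 * n)).ncard
      = (A (2 * n)).ncard + (A (3 * n)).ncard :=
    Set.ncard_inter_add_ncard_union _ _ hfin2 hfin3
  have cardAm : ∀ k : ℕ, 0 < k → (A (k * n)).ncard = q ^ k := by
    intro k hk
    rw [← Nat.card_coe_set_eq, card_A _ (Nat.mul_pos hk hn), pow_eq_q]
  rw [hInter] at e2
  have cA1 : (A n).ncard = q := by
    rw [← Nat.card_coe_set_eq, card_A n hn, hq]
  rw [cardAm 2 (by norm_num), cardAm 3 (by norm_num)] at e2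
  rw [cardAm 6 (by norm_num)] at e1
  rw [cA1] at e2
  -- final arithmetic
  have hScard : Nat.card ↥(S n) = (S n).ncard := Nat.card_coe_set_eq _
  have harb : (q ^ 3 + q - 1) * (q * (q ^ 2 - 1)) + q ^ 2 + q ^ 3 = q ^ 6 + q := by
    have h1q2 : 1 ≤ q ^ 2 := Nat.one_le_pow _ _ (by omega)
    have h1q3 : 1 ≤ q ^ 3 + q := by have := Nat.one_le_pow 3 q (by omega); omega
    zify [h1q2, h1q3]
    ring
  have hN : Nat.card Ω = q ^ 3 + q - 1 := by
    apply Nat.eq_of_mul_eq_mul_right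
      (show 0 < q * (q ^ 2 - 1) by
        have : 1 < q ^ 2 := by nlinarith
        exact Nat.mul_pos (by omega) (by omega))
    rw [← hcount, hScard]
    omega
  -- bijection with the orbit-set type
  have hbij : Nat.card Ω = Nat.card {O : Set K // ∃ α : K,
      (α ^ (2 ^ (6 * n)) = α ∧ α ^ (2 ^ (2 * n)) ≠ α ∧ α ^ (2 ^ (3 * n)) ≠ α) ∧
      O = orbSet n α} := by
    apply Nat.card_eq_of_bijective
      (Quotient.lift (fun x : ↥(S n) => (⟨orbSet n x.1, x.1, x.2, rfl⟩ :
        {O : Set K // ∃ α : K,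
          (α ^ (2 ^ (6 * n)) = α ∧ α ^ (2 ^ (2 * n)) ≠ α ∧ α ^ (2 ^ (3 * n)) ≠ α) ∧
          O = orbSet n α}))
        (by
          intro x y hxy
          have hxy' : MulAction.orbit (GL (Fin 2) (Fq n)) x
              = MulAction.orbit (GL (Fin 2) (Fq n)) y :=
            MulAction.orbit_eq_iff.mpr (MulAction.orbitRel_apply.mp hxy)
          apply Subtype.ext
          show orbSet n x.1 = orbSet n y.1
          rw [← image_orbit, ← image_orbit, hxy']))
    constructor
    · intro ω₁ ω₂
      refine Quotient.inductionOn₂ ω₁ ω₂ ?_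
      intro x y hf
      have hOrb : orbSet n x.1 = orbSet n y.1 := congrArg Subtype.val hf
      rw [← image_orbit, ← image_orbit] at hOrb
      have : MulAction.orbit (GL (Fin 2) (Fq n)) x
          = MulAction.orbit (GL (Fin 2) (Fq n)) y :=
        Set.image_injective.mpr Subtype.val_injective hOrb
      exact Quotient.sound (MulAction.orbitRel_apply.mpr (this ▸ MulAction.mem_orbit_self x))
    · rintro ⟨O, α, hα, rfl⟩
      exact ⟨Quotient.mk _ (⟨α, hα⟩ : ↥(S n)), rfl⟩
  have : Nat.card {O : Set K // ∃ α : K,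
      (α ^ (2 ^ (6 * n)) = α ∧ α ^ (2 ^ (2 * n)) ≠ α ∧ α ^ (2 ^ (3 * n)) ≠ α) ∧
      O = orbSet n α} = q ^ 3 + q - 1 := by rw [← hbij, hN]
  calc Nat.card _ = q ^ 3 + q - 1 := this
  _ = 2 ^ (3 * n) + 2 ^ n - 1 := by rw [hq, ← pow_eq_q]

end
end Stmt4Aux

open Stmt4Aux in
/-- The number of orbits of `PGL₂(F_{2^n})` acting by Möbius transformations on the set of
elements of degree 6 over `F_{2^n}` is `2^{3n} + 2^n - 1`. -/
theorem stmt_4 (n : ℕ) (hn : n.Prime) (hn3 : 3 < n) :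
    Nat.card {O : Set K // ∃ α : K,
        (α ^ (2 ^ (6 * n)) = α ∧ α ^ (2 ^ (2 * n)) ≠ α ∧ α ^ (2 ^ (3 * n)) ≠ α) ∧
        O = {β : K | ∃ a b c d : K,
          a ^ (2 ^ n) = a ∧ b ^ (2 ^ n) = b ∧ c ^ (2 ^ n) = c ∧ d ^ (2 ^ n) = d ∧
          a * d - b * c ≠ 0 ∧ β = (a * α + b) / (c * α + d)}}
      = 2 ^ (3 * n) + 2 ^ n - 1 :=
  Stmt4Aux.main n hn.pos
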